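/- The function g(N) = ∫_0^{π/2} 1/√(2 - N²(1 + sin²θ)) dθ tends to +∞ as N → 1⁻. In particular, for N > √(2/3), setting δ = √((2-2N²)/N²) < 1, one has g(N) > -(1/(√2 N)) log δ. -/

import Mathlib

open MeasureTheory

/-- `g N = ∫_0^{π/2} (2 - N²(1 + sin²θ))^{-1/2} dθ`. -/
noncomputable def g (N : ℝ) : ℝ :=
  ∫ θ in (0:ℝ)..(Real.pi / 2), 1 / Real.sqrt (2 - N ^ 2 * (1 + Real.sin θ ^ 2))

lemma main_bound (N : ℝ) (h1 : Real.sqrt (2 / 3) < N) (h2 : N < 1) :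
    Real.sqrt ((2 - 2 * N ^ 2) / N ^ 2) < 1 ∧
    -(1 / (Real.sqrt 2 * N)) * Real.log (Real.sqrt ((2 - 2 * N ^ 2) / N ^ 2)) < g N := by
  have hNpos : 0 < N := lt_of_le_of_lt (Real.sqrt_nonneg _) h1
  have hN2 : (2:ℝ)/3 < N ^ 2 := by
    have := Real.sq_sqrt (by norm_num : (2:ℝ)/3 ≥ 0)
    nlinarith [Real.sqrt_nonneg ((2:ℝ)/3)]
  have hN1 : N ^ 2 < 1 := by nlinarith
  set a : ℝ := (2 - 2 * N ^ 2) / N ^ 2 with ha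
  have hapos : 0 < a := by
    apply div_pos (by nlinarith) (by positivity)
  have halt : a < 1 := by
    rw [ha, div_lt_one (by positivity)]; nlinarith
  set δ : ℝ := Real.sqrt a with hδ
  have hδpos : 0 < δ := Real.sqrt_pos.mpr hapos
  have hδlt : δ < 1 := by
    rw [hδ, show (1:ℝ) = Real.sqrt 1 by simp]
    exact Real.sqrt_lt_sqrt hapos.le halt
  have hδsq : δ ^ 2 = a := Real.sq_sqrt hapos.le
  refine ⟨hδlt, ?_⟩
  have hπ : (0:ℝ) < Real.pi / 2 := by positivity
  -- key identity: 2 - N²(1+sin²θ) = N²(a + cos²θ)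
  have hkey : ∀ θ : ℝ, 2 - N ^ 2 * (1 + Real.sin θ ^ 2) = N ^ 2 * (a + Real.cos θ ^ 2) := by
    intro θ
    have h1 := Real.sin_sq_add_cos_sq θ
    have : N ^ 2 * a = 2 - 2 * N ^ 2 := by
      rw [ha]; field_simp
    nlinarith
  have hposarg : ∀ θ : ℝ, 0 < 2 - N ^ 2 * (1 + Real.sin θ ^ 2) := by
    intro θ
    rw [hkey θ]
    nlinarith [sq_nonneg (Real.cos θ)]
  -- lower-bound integrand
  set c : ℝ := δ + Real.pi / 2 with hc
  have hden : ∀ θ ∈ Set.Icc (0:ℝ) (Real.pi/2), 0 < c - θ := by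
    intro θ hθ
    have := hθ.2
    simp only [hc]; linarith
  have hpt : ∀ θ ∈ Set.Icc (0:ℝ) (Real.pi/2),
      1 / (N * (c - θ)) ≤ 1 / Real.sqrt (2 - N ^ 2 * (1 + Real.sin θ ^ 2)) := by
    intro θ hθ
    have hcos0 : 0 ≤ Real.cos θ := Real.cos_nonneg_of_mem_Icc ⟨by linarith [hθ.1, Real.pi_pos], hθ.2⟩
    have hcosle : Real.cos θ ≤ Real.pi / 2 - θ := by
      have := Real.sin_le (by linarith [hθ.2] : 0 ≤ Real.pi / 2 - θ)
      rwa [Real.sin_pi_div_two_sub] at this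
    have hsq : 2 - N ^ 2 * (1 + Real.sin θ ^ 2) ≤ (N * (c - θ)) ^ 2 := by
      rw [hkey θ]
      have h1 : Real.cos θ ^ 2 ≤ (Real.pi/2 - θ)^2 := by nlinarith
      have h2 : (N * (c - θ))^2 = N^2 * (δ + (Real.pi/2 - θ))^2 := by rw [hc]; ring
      rw [h2]
      have h3 : 0 ≤ Real.pi/2 - θ := by linarith [hθ.2]
      apply mul_le_mul_of_nonneg_left _ (sq_nonneg N)
      nlinarith [hδsq, mul_nonneg hδpos.le h3]
    have hub : Real.sqrt (2 - N ^ 2 * (1 + Real.sin θ ^ 2)) ≤ N * (c - θ) := by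
      have h4 := Real.sqrt_le_sqrt hsq
      rwa [Real.sqrt_sq (le_of_lt (mul_pos hNpos (hden θ hθ)))] at h4
    exact one_div_le_one_div_of_le (Real.sqrt_pos.mpr (hposarg θ)) hub
  -- integrability
  have hcont1 : ContinuousOn (fun θ : ℝ => 1 / (N * (c - θ))) (Set.Icc 0 (Real.pi/2)) := by
    apply ContinuousOn.div continuousOn_const
    · exact (continuousOn_const.mul ((continuousOn_const.sub continuousOn_id)))
    · intro θ hθ
      exact ne_of_gt (mul_pos hNpos (hden θ hθ))
  have hcont2 : ContinuousOn (fun θ : ℝ => 1 / Real.sqrt (2 - N ^ 2 * (1 + Real.sin θ ^ 2)))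
      (Set.Icc 0 (Real.pi/2)) := by
    apply ContinuousOn.div continuousOn_const
    · exact (Real.continuous_sqrt.comp (continuous_const.sub (continuous_const.mul
        (continuous_const.add (Real.continuous_sin.pow 2))))).continuousOn
    · intro θ _
      exact ne_of_gt (Real.sqrt_pos.mpr (hposarg θ))
  have hint1 : IntervalIntegrable (fun θ : ℝ => 1 / (N * (c - θ))) volume 0 (Real.pi/2) := by
    apply ContinuousOn.intervalIntegrable
    rwa [Set.uIcc_of_le hπ.le]
  have hint2 : IntervalIntegrable (fun θ : ℝ => 1 / Real.sqrt (2 - N ^ 2 * (1 + Real.sin θ ^ 2)))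
      volume 0 (Real.pi/2) := by
    apply ContinuousOn.intervalIntegrable
    rwa [Set.uIcc_of_le hπ.le]
  have hmono := intervalIntegral.integral_mono_on hπ.le hint1 hint2 hpt
  -- compute lower integral
  have hcomp : (∫ θ in (0:ℝ)..(Real.pi/2), 1 / (N * (c - θ)))
      = (1/N) * (Real.log c - Real.log δ) := by
    have hF : ∀ x ∈ Set.uIcc (0:ℝ) (Real.pi/2),
        HasDerivAt (fun x : ℝ => -(1/N) * Real.log (c - x)) (1 / (N * (c - x))) x := by
      intro x hx
      rw [Set.uIcc_of_le hπ.le] at hx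
      have hne : c - x ≠ 0 := ne_of_gt (hden x hx)
      have h1 : HasDerivAt (fun x : ℝ => c - x) (-1) x := by
        simpa using (hasDerivAt_id x).const_sub c
      have h2 := (Real.hasDerivAt_log hne).comp x h1
      have h3 := h2.const_mul (-(1/N))
      have h4 : 1 / (N * (c - x)) = -(1 / N) * ((c - x)⁻¹ * -1) := by rw [one_div, mul_inv]; ring
      rw [h4]; exact h3
    have := intervalIntegral.integral_eq_sub_of_hasDerivAt hF hint1
    rw [this]
    have : c - Real.pi/2 = δ := by rw [hc]; ring
    rw [this, sub_zero]
    ring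
  -- conclude
  have hg : (1/N) * (Real.log c - Real.log δ) ≤ g N := by
    rw [← hcomp]; exact hmono
  have hlogc : 0 < Real.log c := by
    apply Real.log_pos
    rw [hc]
    nlinarith [Real.pi_gt_three]
  have hlogδ : Real.log δ < 0 := Real.log_neg hδpos hδlt
  have hs2 : (1:ℝ) < Real.sqrt 2 := by
    rw [show (1:ℝ) = Real.sqrt 1 by simp]
    exact Real.sqrt_lt_sqrt (by norm_num) (by norm_num)
  have hfrac : 1 / (Real.sqrt 2 * N) < 1 / N := by
    apply one_div_lt_one_div_of_lt hNpos
    nlinarith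
  calc -(1 / (Real.sqrt 2 * N)) * Real.log δ
      < (1/N) * (Real.log c - Real.log δ) := by
        have hA : -(1 / (Real.sqrt 2 * N)) * Real.log δ < (1/N) * (- Real.log δ) := by
          rw [neg_mul, mul_neg]
          apply neg_lt_neg
          apply mul_lt_mul_of_neg_right hfrac hlogδ
        have hB : (1/N) * (- Real.log δ) < (1/N) * (Real.log c - Real.log δ) := by
          apply mul_lt_mul_of_pos_left _ (by positivity : (0:ℝ) < 1/N)
          linarith
        linarith
    _ ≤ g N := hg

theorem g_tendsto_atTop_and_lower_bound :
    Filter.Tendsto g (nhdsWithin 1 (Set.Iio 1)) Filter.atTop ∧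
    ∀ N : ℝ, Real.sqrt (2 / 3) < N → N < 1 →
      Real.sqrt ((2 - 2 * N ^ 2) / N ^ 2) < 1 ∧
      -(1 / (Real.sqrt 2 * N)) * Real.log (Real.sqrt ((2 - 2 * N ^ 2) / N ^ 2)) < g N := by
  constructor
  · -- tendsto
    set φ : ℝ → ℝ := fun N => -(1 / (Real.sqrt 2 * N)) * Real.log (Real.sqrt ((2 - 2 * N ^ 2) / N ^ 2)) with hφ
    have h23 : Real.sqrt (2/3) < 1 := by
      rw [show (1:ℝ) = Real.sqrt 1 by simp]
      exact Real.sqrt_lt_sqrt (by norm_num) (by norm_num)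
    have hev : ∀ᶠ N in nhdsWithin 1 (Set.Iio 1), Real.sqrt (2/3) < N ∧ N < 1 := by
      filter_upwards [eventually_nhdsWithin_of_eventually_nhds (eventually_gt_nhds h23),
        self_mem_nhdsWithin] with N hN hN'
      exact ⟨hN, hN'⟩
    have hevle : ∀ᶠ N in nhdsWithin 1 (Set.Iio 1), φ N ≤ g N := by
      filter_upwards [hev] with N hN
      exact (main_bound N hN.1 hN.2).2.le
    refine Filter.tendsto_atTop_mono' _ hevle ?_
    -- φ tends to atTop
    have hδ0 : Filter.Tendsto (fun N : ℝ => Real.sqrt ((2 - 2 * N ^ 2) / N ^ 2))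
        (nhdsWithin 1 (Set.Iio 1)) (nhdsWithin 0 (Set.Ioi 0)) := by
      rw [tendsto_nhdsWithin_iff]
      constructor
      · have hc : ContinuousAt (fun N : ℝ => Real.sqrt ((2 - 2 * N ^ 2) / N ^ 2)) 1 := by
          apply Real.continuous_sqrt.continuousAt.comp
          apply ContinuousAt.div (by fun_prop) (by fun_prop)
          norm_num
        have := hc.tendsto.mono_left (nhdsWithin_le_nhds (s := Set.Iio (1:ℝ)))
        simpa using this
      · filter_upwards [hev] with N hN
        have hNpos : 0 < N := lt_of_le_of_lt (Real.sqrt_nonneg _) hN.1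
        have hN1 : N ^ 2 < 1 := by nlinarith [hN.2]
        exact Real.sqrt_pos.mpr (div_pos (by nlinarith) (by positivity))
    have hlog : Filter.Tendsto (fun N : ℝ => -Real.log (Real.sqrt ((2 - 2 * N ^ 2) / N ^ 2)))
        (nhdsWithin 1 (Set.Iio 1)) Filter.atTop := by
      have := Real.tendsto_log_nhdsGT_zero.comp hδ0
      exact Filter.tendsto_neg_atBot_atTop.comp this
    have hconst : Filter.Tendsto (fun N : ℝ => 1 / (Real.sqrt 2 * N))
        (nhdsWithin 1 (Set.Iio 1)) (nhds (1 / Real.sqrt 2)) := by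
      have hc : ContinuousAt (fun N : ℝ => 1 / (Real.sqrt 2 * N)) 1 := by
        apply ContinuousAt.div (by fun_prop) (by fun_prop)
        simp [Real.sqrt_eq_zero']
      have := hc.tendsto.mono_left (nhdsWithin_le_nhds (s := Set.Iio (1:ℝ)))
      simpa using this
    have h2pos : (0:ℝ) < 1 / Real.sqrt 2 := by positivity
    have := (hlog.atTop_mul_pos h2pos hconst)
    refine this.congr ?_
    intro N
    simp only [hφ]
    ring
  · intro N h1 h2
    exact main_bound N h1 h2
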